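/- Let G be a 3-connected graph with a tri-separation (C,D) such that both G[C\D] and G[D\C] are disconnected (i.e. (C,D) is not half-connected). If G has no totally-nested nontrivial tri-separation, then G is isomorphic to the complete bipartite graph K_{3,m} for some m ≥ 4. -/

import Mathlib

namespace Paper

open SimpleGraph

variable {V : Type*} [Fintype V] [DecidableEq V]

/-- A graph is `k`-connected if it has more than `k` vertices and deleting
fewer than `k` vertices never disconnects it. -/
def KConnected {W : Type*} (k : ℕ) (H : SimpleGraph W) : Prop :=
  k < Nat.card W ∧ ∀ S : Set W, S.ncard < k → (H.induce Sᶜ).Connected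

/-- A mixed-separation of `G`: `A ∪ B = V(G)` and both `A \ B` and `B \ A` are nonempty. -/
def MixedSep (G : SimpleGraph V) (A B : Set V) : Prop :=
  A ∪ B = Set.univ ∧ (A \ B).Nonempty ∧ (B \ A).Nonempty

/-- The edges of the separator of `(A,B)`: the edges between `A \ B` and `B \ A`. -/
def sepEdges (G : SimpleGraph V) (A B : Set V) : Set (Sym2 V) :=
  {e | e ∈ G.edgeSet ∧ ∃ x ∈ A \ B, ∃ y ∈ B \ A, e = s(x, y)}

/-- The separator of `(A,B)`: the vertices of `A ∩ B` together with the
edges between `A \ B` and `B \ A`, viewed as a set in `V ⊕ Sym2 V`. -/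
def sepSet (G : SimpleGraph V) (A B : Set V) : Set (V ⊕ Sym2 V) :=
  (Sum.inl '' (A ∩ B)) ∪ (Sum.inr '' sepEdges G A B)

/-- The order of a mixed-separation: the size of its separator. -/
noncomputable def sepOrder (G : SimpleGraph V) (A B : Set V) : ℕ :=
  (sepSet G A B).ncard

/-- A mixed `k`-separation. -/
def MixedKSep (G : SimpleGraph V) (k : ℕ) (A B : Set V) : Prop :=
  MixedSep G A B ∧ sepOrder G A B = k

/-- A tri-separation: a mixed 3-separation such that every vertex of `A ∩ B`
has at least two neighbours in both `G[A]` and `G[B]`. -/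
def TriSep (G : SimpleGraph V) (A B : Set V) : Prop :=
  MixedKSep G 3 A B ∧
    ∀ v ∈ A ∩ B, 2 ≤ (G.neighborSet v ∩ A).ncard ∧ 2 ≤ (G.neighborSet v ∩ B).ncard

/-- Two mixed-separations are nested if, after possibly swapping the names of
the sides of either one, `A ⊆ C` and `B ⊇ D`. -/
def Nested (A B C D : Set V) : Prop :=
  (A ⊆ C ∧ D ⊆ B) ∨ (A ⊆ D ∧ C ⊆ B) ∨ (B ⊆ C ∧ D ⊆ A) ∨ (B ⊆ D ∧ C ⊆ A)

/-- The induced subgraph `G[A]` contains a cycle. -/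
def HasCycleIn (G : SimpleGraph V) (A : Set V) : Prop :=
  ∃ (u : V) (p : G.Walk u u), p.IsCycle ∧ ∀ x ∈ p.support, x ∈ A

/-- A mixed 3-separation is nontrivial if both sides induce a subgraph containing a cycle. -/
def NontrivialSep (G : SimpleGraph V) (A B : Set V) : Prop :=
  HasCycleIn G A ∧ HasCycleIn G B

/-- A mixed-separation is strong if every vertex in its separator has degree at least 4. -/
def StrongSep (G : SimpleGraph V) (A B : Set V) : Prop :=
  ∀ v ∈ A ∩ B, 4 ≤ (G.neighborSet v).ncard

/-- A tri-separation is totally nested if it is nested with every tri-separation of `G`. -/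
def TotallyNested (G : SimpleGraph V) (A B : Set V) : Prop :=
  ∀ C D : Set V, TriSep G C D → Nested A B C D

/-- A trivial tri-separation: its sides are the sides `{v}` and `V \ {v}` of an
atomic cut at a degree-3 vertex `v`. -/
def TrivialSep (G : SimpleGraph V) (A B : Set V) : Prop :=
  ∃ v : V, (G.neighborSet v).ncard = 3 ∧
    ((A = {v} ∧ B = {v}ᶜ) ∨ (B = {v} ∧ A = {v}ᶜ))

/-- Diagonal edges of the crossing-diagram of `(A,B)` and `(C,D)`:
edges whose endvertices lie in opposite corners. -/
def diagEdges (G : SimpleGraph V) (A B C D : Set V) : Set (Sym2 V) :=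
  {e | e ∈ G.edgeSet ∧ ∃ x y, e = s(x, y) ∧
    ((x ∈ (A \ B) ∩ (C \ D) ∧ y ∈ (B \ A) ∩ (D \ C)) ∨
     (x ∈ (A \ B) ∩ (D \ C) ∧ y ∈ (B \ A) ∩ (C \ D)))}

/-- The centre of the crossing-diagram: `A ∩ B ∩ C ∩ D` together with the diagonal edges. -/
def centre (G : SimpleGraph V) (A B C D : Set V) : Set (V ⊕ Sym2 V) :=
  (Sum.inl '' (A ∩ B ∩ C ∩ D)) ∪ (Sum.inr '' diagEdges G A B C D)

/-- The link for the side `C` in the crossing-diagram of `(A,B)` and `(C,D)`: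
the vertices `(A ∩ B) \ D` together with the non-diagonal edges of the separator
of `(A,B)` having an endvertex in a corner for `C`. -/
def link (G : SimpleGraph V) (A B C D : Set V) : Set (V ⊕ Sym2 V) :=
  (Sum.inl '' ((A ∩ B) \ D)) ∪
    (Sum.inr '' {e | e ∈ sepEdges G A B ∧ e ∉ diagEdges G A B C D ∧ ∃ x ∈ e, x ∈ C \ D})

/-- The corner-separator at the corner for `{A,C}`: the union of the links for `A`
and for `C` together with the centre, minus the diagonal edges without an
endvertex in the corner for `{A,C}`. -/
def cornerSep (G : SimpleGraph V) (A B C D : Set V) : Set (V ⊕ Sym2 V) :=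
  link G C D A B ∪ link G A B C D ∪ (Sum.inl '' (A ∩ B ∩ C ∩ D)) ∪
    (Sum.inr '' {e | e ∈ diagEdges G A B C D ∧ ∃ x ∈ e, x ∈ (A \ B) ∩ (C \ D)})

/-- Jumping edges: edges joining vertices of two opposite links. -/
def jumpEdges (G : SimpleGraph V) (A B C D : Set V) : Set (Sym2 V) :=
  {e | e ∈ G.edgeSet ∧ ∃ x y, e = s(x, y) ∧
    ((x ∈ (A ∩ B) \ D ∧ y ∈ (A ∩ B) \ C) ∨ (x ∈ (C ∩ D) \ B ∧ y ∈ (C ∩ D) \ A))}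

/-- A 2-separation: a separation of order two with no edges in its separator. -/
def TwoSep (G : SimpleGraph V) (A B : Set V) : Prop :=
  A ∪ B = Set.univ ∧ (A \ B).Nonempty ∧ (B \ A).Nonempty ∧
    (A ∩ B).ncard = 2 ∧ sepEdges G A B = ∅

/-- `K` is (the vertex set of) a connected component of `G - S`. -/
def IsCompOf (G : SimpleGraph V) (S K : Set V) : Prop :=
  ∃ c : (G.induce Sᶜ).ConnectedComponent, K = Subtype.val '' c.supp
set_option linter.unusedSectionVars false
set_option linter.unusedVariables false
set_option maxHeartbeats 1000000


/-- reachability inside a vertex set `T` -/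
def Reach (G : SimpleGraph V) (T : Set V) (u v : V) : Prop :=
  Relation.ReflTransGen (fun a b => G.Adj a b ∧ a ∈ T ∧ b ∈ T) u v

lemma Reach.refl {G : SimpleGraph V} {T : Set V} (u : V) : Reach G T u u :=
  Relation.ReflTransGen.refl

lemma Reach.symm {G : SimpleGraph V} {T : Set V} {u v : V} (h : Reach G T u v) :
    Reach G T v u := by
  refine (@Relation.ReflTransGen.stdSymm _ _ ⟨?_⟩).symm _ _ h
  intro a b ⟨h1, h2, h3⟩
  exact ⟨h1.symm, h3, h2⟩

lemma Reach.trans {G : SimpleGraph V} {T : Set V} {u v w : V} (h : Reach G T u v)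
    (h' : Reach G T v w) : Reach G T u w :=
  Relation.ReflTransGen.trans h h'

lemma Reach.mem_right {G : SimpleGraph V} {T : Set V} {u v : V} (h : Reach G T u v)
    (hu : u ∈ T) : v ∈ T := by
  induction h with
  | refl => exact hu
  | tail _ h ih => exact h.2.2

lemma Reach.tail' {G : SimpleGraph V} {T : Set V} {u v w : V} (h : Reach G T u v)
    (hadj : G.Adj v w) (hv : v ∈ T) (hw : w ∈ T) : Reach G T u w :=
  Relation.ReflTransGen.tail h ⟨hadj, hv, hw⟩

lemma reach_of_induce_walk {G : SimpleGraph V} {T : Set V} :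
    ∀ (a b : T) (_ : (G.induce T).Walk a b), Reach G T a b := by
  intro a b p
  induction p with
  | nil => exact Reach.refl _
  | @cons x y z h p ih =>
      refine Relation.ReflTransGen.head ⟨?_, x.2, y.2⟩ ih
      simpa using h

lemma reach_of_induce_connected {G : SimpleGraph V} {T : Set V}
    (h : (G.induce T).Connected) {u v : V} (hu : u ∈ T) (hv : v ∈ T) :
    Reach G T u v := by
  obtain ⟨p⟩ := h.preconnected ⟨u, hu⟩ ⟨v, hv⟩
  exact reach_of_induce_walk _ _ p

lemma induce_connected_of_reach {G : SimpleGraph V} {T : Set V} (hT : T.Nonempty)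
    (h : ∀ u ∈ T, ∀ v ∈ T, Reach G T u v) : (G.induce T).Connected := by
  have key : ∀ u v : V, Reach G T u v → ∀ (hu : u ∈ T) (hv : v ∈ T),
      (G.induce T).Reachable ⟨u, hu⟩ ⟨v, hv⟩ := by
    intro u v hr
    induction hr using Relation.ReflTransGen.head_induction_on with
    | refl => intro hu hv; rfl
    | head hab _ ih =>
        intro hu hv
        refine Reachable.trans ?_ (ih hab.2.2 hv)
        exact Adj.reachable (by simpa using hab.1)
  rw [connected_iff]
  refine ⟨?_, ⟨⟨hT.choose, hT.choose_spec⟩⟩⟩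
  intro ⟨u, hu⟩ ⟨v, hv⟩
  exact key u v (h u hu v hv) hu hv

lemma closed_absorb {G : SimpleGraph V} (h3 : KConnected 3 G) {S W : Set V}
    (hS : S.ncard ≤ 2) (hW : W.Nonempty) (hWS : ∀ w ∈ W, w ∉ S)
    (hcl : ∀ u ∈ W, ∀ w, G.Adj u w → w ∉ S → w ∈ W) :
    ∀ z, z ∉ S → z ∈ W := by
  intro z hz
  obtain ⟨w₀, hw₀⟩ := hW
  have hconn := h3.2 S (by omega)
  have hr : Reach G Sᶜ w₀ z :=
    reach_of_induce_connected hconn (hWS _ hw₀) hz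
  clear hz
  induction hr with
  | refl => exact hw₀
  | tail _ h ih => exact hcl _ ih _ h.1 h.2.2

lemma three_le_degree {G : SimpleGraph V} (h3 : KConnected 3 G) (v : V) :
    3 ≤ (G.neighborSet v).ncard := by
  by_contra hlt
  push_neg at hlt
  have habs := closed_absorb h3 (S := G.neighborSet v) (W := {v}) (by omega)
    ⟨v, rfl⟩ (by rintro w rfl; exact fun h => G.irrefl h)
    (by rintro u rfl w hadj hw; exact absurd hadj hw)
  have hsub : (Set.univ : Set V) ⊆ G.neighborSet v ∪ {v} := by
    intro z _
    by_cases hz : z ∈ G.neighborSet v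
    · exact Or.inl hz
    · exact Or.inr (habs z hz)
  have hcard : (Set.univ : Set V).ncard ≤ 3 := by
    calc (Set.univ : Set V).ncard ≤ (G.neighborSet v ∪ {v}).ncard :=
          Set.ncard_le_ncard hsub (Set.toFinite _)
    _ ≤ (G.neighborSet v).ncard + ({v} : Set V).ncard := Set.ncard_union_le _ _
    _ ≤ 3 := by simp; omega
  have := h3.1
  rw [← Set.ncard_univ] at this
  omega

/-- the component of `v` in `G - X` -/
def cmp (G : SimpleGraph V) (X : Set V) (v : V) : Set V := {w | Reach G Xᶜ v w}

lemma mem_cmp_self (G : SimpleGraph V) (X : Set V) (v : V) : v ∈ cmp G X v :=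
  Reach.refl _

lemma cmp_subset_compl {G : SimpleGraph V} {X : Set V} {v : V} (hv : v ∉ X) :
    cmp G X v ⊆ Xᶜ := by
  intro w hw
  exact Reach.mem_right hw hv

lemma cmp_eq_of_mem {G : SimpleGraph V} {X : Set V} {v w : V} (hw : w ∈ cmp G X v) :
    cmp G X v = cmp G X w := by
  ext z
  exact ⟨fun hz => Reach.trans (Reach.symm hw) hz, fun hz => Reach.trans hw hz⟩

lemma cmp_eq_of_common {G : SimpleGraph V} {X : Set V} {v w z : V}
    (hzv : z ∈ cmp G X v) (hzw : z ∈ cmp G X w) : cmp G X v = cmp G X w := by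
  rw [cmp_eq_of_mem hzv, cmp_eq_of_mem hzw]

lemma cmp_closed {G : SimpleGraph V} {X : Set V} {v u w : V} (hv : v ∉ X)
    (hu : u ∈ cmp G X v) (hadj : G.Adj u w) (hw : w ∉ X) : w ∈ cmp G X v :=
  Reach.tail' hu hadj (cmp_subset_compl hv hu) hw

lemma cmp_adj {G : SimpleGraph V} {X : Set V} {v u w : V} (hv : v ∉ X) (hw : w ∉ X)
    (hu : u ∈ cmp G X v) (hadj : G.Adj u w) : cmp G X v = cmp G X w :=
  cmp_eq_of_common (cmp_closed hv hu hadj hw) (mem_cmp_self _ _ _)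

/-- a walk staying inside the component -/
lemma walk_of_reach {G : SimpleGraph V} {T : Set V} {u w : V} (h : Reach G T u w) :
    ∃ p : G.Walk u w, ∀ s ∈ p.support, Reach G T u s := by
  induction h with
  | refl =>
      refine ⟨Walk.nil, ?_⟩
      intro s hs
      simp only [Walk.support_nil, List.mem_singleton] at hs
      subst hs
      exact Reach.refl _
  | @tail b c hub hbc ih =>
      obtain ⟨p, hp⟩ := ih
      refine ⟨p.concat hbc.1, ?_⟩
      intro s hs
      rw [Walk.support_concat, List.mem_append,
        List.mem_singleton] at hs
      rcases hs with hs | rfl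
      · exact hp s hs
      · exact Relation.ReflTransGen.tail hub hbc

/-- only one edge of a path contains its first vertex -/
lemma path_start_unique_nbr {G : SimpleGraph V} {u w z1 z2 : V} (p : G.Walk u w)
    (hp : p.IsPath) (h1 : s(u, z1) ∈ p.edges) (h2 : s(u, z2) ∈ p.edges) : z1 = z2 := by
  induction p with
  | nil => simp at h1
  | @cons a b c h q ih =>
      rw [Walk.edges_cons, List.mem_cons] at h1 h2
      rw [Walk.cons_isPath_iff] at hp
      have key : ∀ z : V, s(a, z) ∈ q.edges → False := by
        intro z hz
        exact hp.2 (q.fst_mem_support_of_mem_edges hz)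
      rcases h1 with h1 | h1
      · rcases h2 with h2 | h2
        · rw [Sym2.eq_iff] at h1 h2
          rcases h1 with ⟨-, rfl⟩ | ⟨hab, -⟩
          · rcases h2 with ⟨-, rfl⟩ | ⟨hab, -⟩
            · rfl
            · exact absurd hab h.ne
          · exact absurd hab h.ne
        · exact absurd h2 (fun hz => key _ hz)
      · exact absurd h1 (fun hz => key _ hz)

/-- A set in which every vertex except possibly `v₀` has two neighbours inside
contains a cycle. -/
lemma cycle_of_min_degree {G : SimpleGraph V} {W : Set V} {v₀ v₁ : V}
    (h1 : v₁ ∈ W) (hne : v₁ ≠ v₀)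
    (hdeg : ∀ w ∈ W, w ≠ v₀ → 2 ≤ (G.neighborSet w ∩ W).ncard) :
    HasCycleIn G W := by
  by_contra hnc
  have main : ∀ n : ℕ, ∃ (u w : V) (p : G.Walk u w), p.IsPath ∧
      (∀ s ∈ p.support, s ∈ W) ∧ u ≠ v₀ ∧ p.length = n := by
    intro n
    induction n with
    | zero => exact ⟨v₁, v₁, Walk.nil, by simp [h1, hne]⟩
    | succ n ih =>
        obtain ⟨u, w, p, hp, hsupp, hu, hlen⟩ := ih
        have huW : u ∈ W := hsupp u p.start_mem_support
        have hdegu := hdeg u huW hu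
        by_cases hex : ∃ z ∈ G.neighborSet u ∩ W, z ∉ p.support
        · obtain ⟨z, ⟨hz1, hz2⟩, hz3⟩ := hex
          have hadj : G.Adj z u := hz1.symm
          by_cases hzv : z = v₀
          · -- extend at front lands on v₀; use the reverse
            have hwv : w ≠ v₀ := by
              rintro rfl
              exact hz3 (hzv ▸ p.end_mem_support)
            refine ⟨w, z, (Walk.cons hadj p).reverse, ?_, ?_, hwv, ?_⟩
            · rw [Walk.isPath_reverse_iff, Walk.cons_isPath_iff]
              exact ⟨hp, hz3⟩
            · intro s hs
              rw [Walk.support_reverse, List.mem_reverse, Walk.support_cons,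
                List.mem_cons] at hs
              rcases hs with rfl | hs
              · exact hz2
              · exact hsupp s hs
            · simp [hlen]
          · refine ⟨z, w, Walk.cons hadj p, ?_, ?_, hzv, ?_⟩
            · rw [Walk.cons_isPath_iff]; exact ⟨hp, hz3⟩
            · intro s hs
              rw [Walk.support_cons, List.mem_cons] at hs
              rcases hs with rfl | hs
              · exact hz2
              · exact hsupp s hs
            · simp [hlen]
        · -- all neighbours on the path: find a cycle
          push_neg at hex
          obtain ⟨z1, hz1, z2, hz2, hz12⟩ := (Set.one_lt_ncard (Set.toFinite _)).1
            (by omega : 1 < (G.neighborSet u ∩ W).ncard)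
          have hchoose : ∃ z ∈ G.neighborSet u ∩ W, s(u, z) ∉ p.edges := by
            by_contra hall
            push_neg at hall
            exact hz12 (path_start_unique_nbr p hp (hall z1 hz1) (hall z2 hz2))
          obtain ⟨z, ⟨hz1', hz2'⟩, hz3'⟩ := hchoose
          have hzs : z ∈ p.support := hex z ⟨hz1', hz2'⟩
          set q := p.takeUntil z hzs with hq
          have hqp : q.IsPath := hp.takeUntil hzs
          have hcyc : (Walk.cons (G.adj_symm hz1' : G.Adj z u) q).IsCycle := by
            rw [Walk.cons_isCycle_iff]
            refine ⟨hqp, fun hmem => hz3' ?_⟩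
            refine p.edges_takeUntil_subset hzs ?_
            rwa [Sym2.eq_swap] at hmem
          exfalso
          refine hnc ⟨z, _, hcyc, ?_⟩
          intro s hs
          rw [Walk.support_cons, List.mem_cons] at hs
          rcases hs with rfl | hs
          · exact hz2'
          · exact hsupp s (p.support_takeUntil_subset hzs hs)
  obtain ⟨u, w, p, hp, _, _, hlen⟩ := main (Fintype.card V)
  have := hp.length_lt
  omega
lemma sepOrder_eq (G : SimpleGraph V) (A B : Set V) :
    sepOrder G A B = (A ∩ B).ncard + (sepEdges G A B).ncard := by
  unfold sepOrder sepSet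
  rw [Set.ncard_union_eq ?_ (Set.toFinite _) (Set.toFinite _),
    Set.ncard_image_of_injective _ Sum.inl_injective,
    Set.ncard_image_of_injective _ Sum.inr_injective]
  rw [Set.disjoint_left]
  rintro x ⟨a, -, rfl⟩ ⟨e, -, h⟩
  exact Sum.inl_ne_inr h.symm

lemma sepEdges_comm (G : SimpleGraph V) (A B : Set V) :
    sepEdges G B A = sepEdges G A B := by
  ext e
  constructor <;> rintro ⟨he, x, hx, y, hy, rfl⟩ <;>
    exact ⟨he, y, hy, x, hx, Sym2.eq_swap.symm⟩

lemma TriSep.symm' {G : SimpleGraph V} {A B : Set V} (h : TriSep G A B) : TriSep G B A := by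
  obtain ⟨⟨⟨hu, h1, h2⟩, hord⟩, htri⟩ := h
  refine ⟨⟨⟨by rwa [Set.union_comm], h2, h1⟩, ?_⟩, ?_⟩
  · rw [← hord]
    unfold sepOrder sepSet
    rw [Set.inter_comm, sepEdges_comm]
  · intro v hv
    rw [Set.inter_comm] at hv
    exact (htri v hv).symm

lemma nested_flip {A B Cs Ds : Set V} (h : Nested A B Ds Cs) : Nested A B Cs Ds := by
  unfold Nested at h ⊢
  tauto

lemma cover_cases {C D : Set V} (hu : C ∪ D = Set.univ) (w : V) :
    w ∈ C \ D ∨ w ∈ C ∩ D ∨ w ∈ D \ C := by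
  have : w ∈ C ∪ D := hu ▸ Set.mem_univ w
  simp only [Set.mem_diff, Set.mem_inter_iff]
  rcases this with h | h <;> by_cases h2 : w ∈ C <;> by_cases h3 : w ∈ D <;> tauto

/-- A tri-separation one of whose sides induces a disconnected graph has no
edges in its separator. -/
lemma sepEdges_empty_of_disconnected {G : SimpleGraph V} (h3 : KConnected 3 G)
    {C D : Set V} (hCD : TriSep G C D)
    (h1 : ¬ (G.induce (C \ D)).Connected) : sepEdges G C D = ∅ := by
  classical
  by_contra hne
  set P := C \ D with hPdef
  set Q := D \ C with hQdef
  set X := C ∩ D with hXdef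
  set E := sepEdges G C D with hEdef
  obtain ⟨⟨⟨huniv, hPne, hQne⟩, hord⟩, -⟩ := hCD
  rw [sepOrder_eq] at hord
  rw [← hEdef, ← hXdef] at hord
  have hEpos : 1 ≤ E.ncard := by
    rw [Nat.one_le_iff_ne_zero]
    intro h0
    exact hne (by rwa [← Set.ncard_eq_zero (Set.toFinite _)])
  have hPQ : ∀ w, w ∈ P → w ∈ Q → False := fun w hw1 hw2 => hw2.2 hw1.1
  have hPX : ∀ w, w ∈ P → w ∈ X → False := fun w hw1 hw2 => hw1.2 hw2.2
  have hexp : ∃ p1 ∈ P, ∃ p2 ∈ P, ¬ Reach G P p1 p2 := by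
    by_contra hall
    push_neg at hall
    exact h1 (induce_connected_of_reach hPne hall)
  obtain ⟨p1, hp1, p2, hp2, hnr⟩ := hexp
  have key : ∀ a b : V, a ∈ P → b ∈ P → ¬ Reach G P a b →
      ({e ∈ E | ∃ s ∈ {w | Reach G P a w}, s ∈ e}).ncard < E.ncard → False := by
    intro a b ha hb hab hsmall
    set La := {w | Reach G P a w} with hLa
    set Ya := {y | y ∈ Q ∧ ∃ x ∈ La, G.Adj x y} with hYa
    set Ea := {e ∈ E | ∃ s ∈ La, s ∈ e} with hEa
    have hLaP : ∀ w ∈ La, w ∈ P := fun w hw => Reach.mem_right hw ha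
    have hYE : Ya.ncard ≤ Ea.ncard := by
      have hpick : ∀ y ∈ Ya, ∃ x, x ∈ La ∧ G.Adj x y := by
        intro y hy; exact hy.2
      set f : V → Sym2 V := fun y =>
        if h : ∃ x, x ∈ La ∧ G.Adj x y then s(h.choose, y) else s(y, y) with hf
      refine Set.ncard_le_ncard_of_injOn f ?_ ?_ (Set.toFinite _)
      · intro y hy
        have h := hpick y hy
        obtain ⟨hx1, hx2⟩ := h.choose_spec
        simp only [hf, dif_pos h]
        exact ⟨⟨G.mem_edgeSet.2 hx2, h.choose, hLaP _ hx1, y, hy.1, rfl⟩,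
          h.choose, hx1, Sym2.mem_iff.2 (Or.inl rfl)⟩
      · intro y hy y' hy' heq
        have h := hpick y hy
        have h' := hpick y' hy'
        simp only [hf, dif_pos h, dif_pos h'] at heq
        rw [Sym2.eq_iff] at heq
        rcases heq with ⟨-, rfl⟩ | ⟨h1', h2'⟩
        · rfl
        · exact absurd (h2' ▸ hy.1) (fun hq => hPQ _ (hLaP _ h'.choose_spec.1) hq)
    set Sa := X ∪ Ya with hSaDef
    have hSa2 : Sa.ncard ≤ 2 := by
      have h1' : Sa.ncard ≤ X.ncard + Ya.ncard := Set.ncard_union_le _ _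
      omega
    have hWS : ∀ w ∈ La, w ∉ Sa := by
      intro w hw
      rintro (hwX | hwY)
      · exact hPX w (hLaP w hw) hwX
      · exact hPQ w (hLaP w hw) hwY.1
    have hcl : ∀ u ∈ La, ∀ w, G.Adj u w → w ∉ Sa → w ∈ La := by
      intro u hu w hadj hwS
      rcases cover_cases huniv w with hwP | hwX | hwQ
      · exact Reach.tail' hu hadj (hLaP u hu) hwP
      · exact absurd (Or.inl hwX) hwS
      · exact absurd (Or.inr ⟨hwQ, u, hu, hadj⟩) hwS
    have habs := closed_absorb h3 hSa2 ⟨a, Relation.ReflTransGen.refl⟩ hWS hcl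
    refine hab (habs b ?_)
    rintro (hbX | hbY)
    · exact hPX b hb hbX
    · exact hPQ b hb hbY.1
  set E1 := {e ∈ E | ∃ s ∈ {w | Reach G P p1 w}, s ∈ e} with hE1
  set E2 := {e ∈ E | ∃ s ∈ {w | Reach G P p2 w}, s ∈ e} with hE2
  have hdisj : ∀ e, e ∈ E1 → e ∈ E2 → False := by
    rintro e ⟨heE, s1, hs1, hs1e⟩ ⟨-, s2, hs2, hs2e⟩
    obtain ⟨-, x, hx, y, hy, rfl⟩ := heE
    have hs1x : s1 = x := by
      rcases Sym2.mem_iff.1 hs1e with h | h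
      · exact h
      · exact absurd (h ▸ Reach.mem_right hs1 hp1) (fun hp => hPQ _ hp hy)
    have hs2x : s2 = x := by
      rcases Sym2.mem_iff.1 hs2e with h | h
      · exact h
      · exact absurd (h ▸ Reach.mem_right hs2 hp2) (fun hp => hPQ _ hp hy)
    exact hnr (Reach.trans (hs1x ▸ hs1) (Reach.symm (hs2x ▸ hs2)))
  have hsum : E1.ncard + E2.ncard ≤ E.ncard := by
    rw [← Set.ncard_union_eq (Set.disjoint_left.2 (fun e h1' h2' => hdisj e h1' h2'))
      (Set.toFinite _) (Set.toFinite _)]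
    exact Set.ncard_le_ncard (fun e he => by
      rcases he with h | h
      · exact h.1
      · exact h.1) (Set.toFinite _)
  rcases lt_or_ge E1.ncard E.ncard with hlt | hge
  · exact key p1 p2 hp1 hp2 hnr hlt
  · refine key p2 p1 hp2 hp1 (fun h => hnr h.symm) ?_
    rw [← hE2]
    omega
/-- marker: the unit `μ` lies in the component `K` -/
def Mk (G : SimpleGraph V) : V ⊕ Sym2 V → Set V → Prop
  | Sum.inl t, K => t ∈ K
  | Sum.inr e, K => e ∈ G.edgeSet ∧ ∃ s ∈ e, s ∈ K

lemma reach_of_same_cmp {G : SimpleGraph V} {X : Set V} {v u w : V}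
    (hu : u ∈ cmp G X v) (hw : w ∈ cmp G X v) : Reach G Xᶜ u w :=
  Reach.trans (Reach.symm hu) hw

lemma marker_ne {G : SimpleGraph V} {X : Set V} {v1 v2 : V}
    (h12 : cmp G X v1 ≠ cmp G X v2) (hv1 : v1 ∉ X) (hv2 : v2 ∉ X)
    (μ : V ⊕ Sym2 V) (hm1 : Mk G μ (cmp G X v1)) (hm2 : Mk G μ (cmp G X v2)) : False := by
  cases μ with
  | inl t => exact h12 (cmp_eq_of_common hm1 hm2)
  | inr e =>
      obtain ⟨hedge, s, hse, hs1⟩ := hm1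
      obtain ⟨-, s', hs'e, hs'2⟩ := hm2
      by_cases hss : s = s'
      · exact h12 (cmp_eq_of_common hs1 (hss ▸ hs'2))
      · induction e with
        | _ x y =>
          rw [SimpleGraph.mem_edgeSet] at hedge
          have hadj : G.Adj s s' := by
            rcases Sym2.mem_iff.1 hse with rfl | rfl <;>
              rcases Sym2.mem_iff.1 hs'e with rfl | rfl
            · exact absurd rfl hss
            · exact hedge
            · exact hedge.symm
            · exact absurd rfl hss
          have hs'X : s' ∉ X := cmp_subset_compl hv2 hs'2
          have : s' ∈ cmp G X v1 := cmp_closed hv1 hs1 hadj hs'X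
          exact h12 (cmp_eq_of_common this hs'2)

lemma four_le_ncard {α : Type*} {s : Set α} (hfin : s.Finite) {a b c d : α}
    (ha : a ∈ s) (hb : b ∈ s) (hc : c ∈ s) (hd : d ∈ s)
    (hab : a ≠ b) (hac : a ≠ c) (had : a ≠ d) (hbc : b ≠ c) (hbd : b ≠ d) (hcd : c ≠ d) :
    4 ≤ s.ncard := by
  have hfin4 : ({b, c, d} : Set α).Finite :=
    ((Set.finite_singleton d).insert c).insert b
  have h1 : ({a, b, c, d} : Set α).ncard = 4 := by
    rw [Set.ncard_insert_of_notMem (by simp [hab, hac, had]) hfin4,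
      Set.ncard_insert_of_notMem (by simp [hbc, hbd]) ((Set.finite_singleton d).insert c),
      Set.ncard_insert_of_notMem (by simp [hcd]) (Set.finite_singleton d),
      Set.ncard_singleton]
  rw [← h1]
  refine Set.ncard_le_ncard ?_ hfin
  rintro x (rfl | rfl | rfl | rfl)
  exacts [ha, hb, hc, hd]

/-- the standing assumptions after the preliminary steps: a 3-connected graph
with a 3-element vertex cut `X` such that `G - X` has at least 4 components -/
structure Good (G : SimpleGraph V) (X : Set V) : Prop where
  conn : KConnected 3 G
  hX3 : X.ncard = 3
  four : ∃ a1 a2 a3 a4 : V, a1 ∉ X ∧ a2 ∉ X ∧ a3 ∉ X ∧ a4 ∉ X ∧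
    cmp G X a1 ≠ cmp G X a2 ∧ cmp G X a1 ≠ cmp G X a3 ∧ cmp G X a1 ≠ cmp G X a4 ∧
    cmp G X a2 ≠ cmp G X a3 ∧ cmp G X a2 ≠ cmp G X a4 ∧ cmp G X a3 ≠ cmp G X a4

/-- every vertex of `X` has a neighbour in every component of `G - X` -/
lemma good_nbr {G : SimpleGraph V} {X : Set V} (hg : Good G X) :
    ∀ x ∈ X, ∀ v, v ∉ X → ∃ u, u ∈ cmp G X v ∧ G.Adj x u := by
  intro x hx v hv
  by_contra hno
  push_neg at hno
  have hS2 : (X \ {x}).ncard ≤ 2 := by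
    rw [Set.ncard_diff_singleton_of_mem hx, hg.hX3]
  have hWS : ∀ w ∈ cmp G X v, w ∉ X \ {x} := by
    intro w hw hwS
    exact (cmp_subset_compl hv hw) hwS.1
  have hcl : ∀ u ∈ cmp G X v, ∀ w, G.Adj u w → w ∉ X \ {x} → w ∈ cmp G X v := by
    intro u hu w hadj hwS
    by_cases hwX : w ∈ X
    · have hwx : w = x := by
        by_contra hne
        exact hwS ⟨hwX, hne⟩
      subst hwx
      exact absurd hadj.symm (hno u hu)
    · exact cmp_closed hv hu hadj hwX
  have habs := closed_absorb hg.conn hS2 ⟨v, mem_cmp_self _ _ _⟩ hWS hcl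
  have hxmem : x ∈ cmp G X v := habs x (by simp)
  exact (cmp_subset_compl hv hxmem) hx

/-- crossing a chain from `Cs` to the outside of `Cs` produces a unit in the component -/
lemma cross_chain {G : SimpleGraph V} {X Cs Ds : Set V} (huniv : Cs ∪ Ds = Set.univ)
    {v : V} (hv : v ∉ X) {u w : V} (hch : Reach G Xᶜ u w)
    (hu : u ∈ cmp G X v) (huC : u ∈ Cs) (hw : w ∉ Cs) :
    ∃ μ ∈ sepSet G Cs Ds, Mk G μ (cmp G X v) := by
  revert hu huC
  induction hch using Relation.ReflTransGen.head_induction_on with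
  | refl => intro hu huC; exact absurd huC hw
  | @head a c hac hcw ih =>
      intro ha haC
      by_cases haD : a ∈ Ds
      · exact ⟨Sum.inl a, Or.inl ⟨a, ⟨haC, haD⟩, rfl⟩, ha⟩
      · have hcX : c ∉ X := hac.2.2
        have hc : c ∈ cmp G X v := cmp_closed hv ha hac.1 hcX
        by_cases hcC : c ∈ Cs
        · exact ih hc hcC
        · have hcD : c ∈ Ds := by
            rcases huniv ▸ Set.mem_univ c with h | h
            · exact absurd h hcC
            · exact h
          refine ⟨Sum.inr s(a, c), Or.inr ⟨s(a, c), ?_, rfl⟩, ?_⟩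
          · exact ⟨G.mem_edgeSet.2 hac.1, a, ⟨haC, haD⟩, c, ⟨hcD, hcC⟩, rfl⟩
          · exact ⟨G.mem_edgeSet.2 hac.1, a, Sym2.mem_iff.2 (Or.inl rfl), ha⟩
lemma unit_of_comp {G : SimpleGraph V} {X : Set V} (hg : Good G X) {Cs Ds : Set V}
    (huniv : Cs ∪ Ds = Set.univ)
    {xc xd : V} (hxc : xc ∈ X) (hxcC : xc ∈ Cs) (hxcD : xc ∉ Ds)
    (hxd : xd ∈ X) (hxdD : xd ∈ Ds) (hxdC : xd ∉ Cs)
    {v : V} (hv : v ∉ X) :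
    ∃ μ ∈ sepSet G Cs Ds, Mk G μ (cmp G X v) := by
  obtain ⟨u, hu, hxcu⟩ := good_nbr hg xc hxc v hv
  obtain ⟨w, hwmem, hxdw⟩ := good_nbr hg xd hxd v hv
  by_cases huD : u ∈ Ds
  · by_cases huC : u ∈ Cs
    · exact ⟨Sum.inl u, Or.inl ⟨u, ⟨huC, huD⟩, rfl⟩, hu⟩
    · refine ⟨Sum.inr s(xc, u), Or.inr ⟨s(xc, u),
        ⟨G.mem_edgeSet.2 hxcu, xc, ⟨hxcC, hxcD⟩, u, ⟨huD, huC⟩, rfl⟩, rfl⟩, ?_⟩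
      exact ⟨G.mem_edgeSet.2 hxcu, u, Sym2.mem_iff.2 (Or.inr rfl), hu⟩
  · have huC : u ∈ Cs := by
      rcases huniv ▸ Set.mem_univ u with h | h
      · exact h
      · exact absurd h huD
    by_cases hwC : w ∈ Cs
    · by_cases hwD : w ∈ Ds
      · exact ⟨Sum.inl w, Or.inl ⟨w, ⟨hwC, hwD⟩, rfl⟩, hwmem⟩
      · refine ⟨Sum.inr s(w, xd), Or.inr ⟨s(w, xd),
          ⟨G.mem_edgeSet.2 hxdw.symm, w, ⟨hwC, hwD⟩, xd, ⟨hxdD, hxdC⟩, rfl⟩, rfl⟩, ?_⟩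
        exact ⟨G.mem_edgeSet.2 hxdw.symm, w, Sym2.mem_iff.2 (Or.inl rfl), hwmem⟩
    · exact cross_chain huniv hv (reach_of_same_cmp hu hwmem) hu huC hwC

/-- `X` lies entirely within one side of any tri-separation -/
lemma X_one_side {G : SimpleGraph V} {X : Set V} (hg : Good G X) {Cs Ds : Set V}
    (hT : TriSep G Cs Ds) : X ⊆ Cs ∨ X ⊆ Ds := by
  by_contra hcon
  rw [not_or, Set.not_subset, Set.not_subset] at hcon
  obtain ⟨⟨xd, hxd, hxdC⟩, ⟨xc, hxc, hxcD⟩⟩ := hcon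
  have huniv := hT.1.1.1
  have hxdD : xd ∈ Ds := by
    rcases huniv ▸ Set.mem_univ xd with h | h
    · exact absurd h hxdC
    · exact h
  have hxcC : xc ∈ Cs := by
    rcases huniv ▸ Set.mem_univ xc with h | h
    · exact h
    · exact absurd h hxcD
  obtain ⟨a1, a2, a3, a4, h1, h2, h3, h4, h12, h13, h14, h23, h24, h34⟩ := hg.four
  obtain ⟨μ1, hμ1, hm1⟩ := unit_of_comp hg huniv hxc hxcC hxcD hxd hxdD hxdC h1
  obtain ⟨μ2, hμ2, hm2⟩ := unit_of_comp hg huniv hxc hxcC hxcD hxd hxdD hxdC h2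
  obtain ⟨μ3, hμ3, hm3⟩ := unit_of_comp hg huniv hxc hxcC hxcD hxd hxdD hxdC h3
  obtain ⟨μ4, hμ4, hm4⟩ := unit_of_comp hg huniv hxc hxcC hxcD hxd hxdD hxdC h4
  have hord := hT.1.2
  unfold sepOrder at hord
  have h4le : 4 ≤ (sepSet G Cs Ds).ncard :=
    four_le_ncard (Set.toFinite _) hμ1 hμ2 hμ3 hμ4
      (fun h => marker_ne h12 h1 h2 μ2 (h ▸ hm1) hm2)
      (fun h => marker_ne h13 h1 h3 μ3 (h ▸ hm1) hm3)
      (fun h => marker_ne h14 h1 h4 μ4 (h ▸ hm1) hm4)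
      (fun h => marker_ne h23 h2 h3 μ3 (h ▸ hm2) hm3)
      (fun h => marker_ne h24 h2 h4 μ4 (h ▸ hm2) hm4)
      (fun h => marker_ne h34 h3 h4 μ4 (h ▸ hm3) hm4)
  omega

/-- if `X ⊆ Cs` and `q` is on the `Ds`-only side, then the whole separator of
`(Cs, Ds)` lives in the component of `q` -/
lemma all_in {G : SimpleGraph V} {X : Set V} (hg : Good G X) {Cs Ds : Set V}
    (hT : TriSep G Cs Ds) (hXC : X ⊆ Cs) {q : V} (hq : q ∈ Ds) (hqC : q ∉ Cs) :
    ((Cs ∩ Ds) \ X ⊆ cmp G X q) ∧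
      (∀ e ∈ sepEdges G Cs Ds, ∃ s ∈ e, s ∈ cmp G X q) := by
  classical
  have huniv := hT.1.1.1
  have horder : (Cs ∩ Ds).ncard + (sepEdges G Cs Ds).ncard = 3 := by
    have := hT.1.2
    rwa [sepOrder_eq] at this
  have hqX : q ∉ X := fun h => hqC (hXC h)
  set Km := cmp G X q with hKm
  set Tm := {w | w ∈ Cs \ Ds ∧ ∃ u, u ∈ (Ds \ Cs) ∩ Km ∧ G.Adj u w} with hTmdef
  -- the injection from Tm into edge sets
  set f : V → Sym2 V := fun w =>
    if h : ∃ u, u ∈ (Ds \ Cs) ∩ Km ∧ G.Adj u w then s(w, h.choose) else s(w, w) with hf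
  have hfmem : ∀ w ∈ Tm, ∃ u, (u ∈ (Ds \ Cs) ∩ Km ∧ G.Adj u w) ∧ f w = s(w, u) := by
    intro w hw
    have h : ∃ u, u ∈ (Ds \ Cs) ∩ Km ∧ G.Adj u w := hw.2
    exact ⟨h.choose, h.choose_spec, by simp only [hf, dif_pos h]⟩
  have hfE : ∀ w ∈ Tm, f w ∈ sepEdges G Cs Ds ∧ ∃ s ∈ f w, s ∈ Km := by
    intro w hw
    obtain ⟨u, ⟨⟨huD, huKm⟩, hadj⟩, hfw⟩ := hfmem w hw
    rw [hfw]
    exact ⟨⟨G.mem_edgeSet.2 hadj.symm, w, hw.1, u, huD, rfl⟩,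
      u, Sym2.mem_iff.2 (Or.inr rfl), huKm⟩
  have hfinj : Set.InjOn f Tm := by
    intro w hw w' hw' heq
    obtain ⟨u, ⟨⟨huD, _⟩, _⟩, hfw⟩ := hfmem w hw
    obtain ⟨u', ⟨⟨hu'D, _⟩, _⟩, hfw'⟩ := hfmem w' hw'
    rw [hfw, hfw'] at heq
    rw [Sym2.eq_iff] at heq
    rcases heq with ⟨h, -⟩ | ⟨h1', -⟩
    · exact h
    · exact absurd hw.1.1 (fun hc => (h1' ▸ hu'D).2 hc)
  by_contra hcon
  rw [not_and_or] at hcon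
  -- in either case we obtain a removal set of size ≤ 2
  set Sm := ((Cs ∩ Ds) ∩ (X ∪ Km)) ∪ Tm with hSmdef
  have hSm2 : Sm.ncard ≤ 2 := by
    have hun : Sm.ncard ≤ ((Cs ∩ Ds) ∩ (X ∪ Km)).ncard + Tm.ncard := Set.ncard_union_le _ _
    rcases hcon with hv | he
    · -- a separator vertex x₀ outside X and outside Km
      rw [Set.not_subset] at hv
      obtain ⟨x₀, hx₀, hx₀K⟩ := hv
      have hsub : (Cs ∩ Ds) ∩ (X ∪ Km) ⊆ (Cs ∩ Ds) \ {x₀} := by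
        rintro w ⟨hw1, hw2⟩
        refine ⟨hw1, ?_⟩
        rintro rfl
        rcases hw2 with h | h
        · exact hx₀.2 h
        · exact hx₀K h
      have h1' : ((Cs ∩ Ds) ∩ (X ∪ Km)).ncard ≤ ((Cs ∩ Ds) \ {x₀}).ncard :=
        Set.ncard_le_ncard hsub (Set.toFinite _)
      have h2' : ((Cs ∩ Ds) \ {x₀}).ncard = (Cs ∩ Ds).ncard - 1 :=
        Set.ncard_diff_singleton_of_mem hx₀.1
      have h3' : Tm.ncard ≤ (sepEdges G Cs Ds).ncard :=
        Set.ncard_le_ncard_of_injOn f (fun w hw => (hfE w hw).1) hfinj (Set.toFinite _)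
      have hx₀pos : 1 ≤ (Cs ∩ Ds).ncard := by
        rw [Nat.one_le_iff_ne_zero]
        intro h0
        rw [Set.ncard_eq_zero (Set.toFinite _)] at h0
        exact absurd (h0 ▸ hx₀.1) (Set.notMem_empty x₀)
      omega
    · -- an edge e₀ with no endpoint in Km
      push_neg at he
      obtain ⟨e₀, he₀, he₀K⟩ := he
      have h1' : ((Cs ∩ Ds) ∩ (X ∪ Km)).ncard ≤ (Cs ∩ Ds).ncard :=
        Set.ncard_le_ncard Set.inter_subset_left (Set.toFinite _)
      have h3' : Tm.ncard ≤ (sepEdges G Cs Ds \ {e₀}).ncard := by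
        refine Set.ncard_le_ncard_of_injOn f ?_ hfinj (Set.toFinite _)
        intro w hw
        obtain ⟨hfE1, s, hs1, hs2⟩ := hfE w hw
        refine ⟨hfE1, ?_⟩
        intro hmem
        rw [Set.mem_singleton_iff] at hmem
        exact he₀K s (hmem ▸ hs1) hs2
      have h4' : (sepEdges G Cs Ds \ {e₀}).ncard = (sepEdges G Cs Ds).ncard - 1 :=
        Set.ncard_diff_singleton_of_mem he₀
      have hepos : 1 ≤ (sepEdges G Cs Ds).ncard := by
        rw [Nat.one_le_iff_ne_zero]
        intro h0
        rw [Set.ncard_eq_zero (Set.toFinite _)] at h0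
        exact absurd (h0 ▸ he₀) (Set.notMem_empty e₀)
      omega
  -- the component part of `q` on the `Ds`-only side is closed after removing Sm
  set W := (Ds \ Cs) ∩ Km with hWdef
  have hWne : W.Nonempty := ⟨q, ⟨hq, hqC⟩, mem_cmp_self _ _ _⟩
  have hWS : ∀ w ∈ W, w ∉ Sm := by
    rintro w ⟨⟨hwD, hwC⟩, -⟩
    rintro (⟨⟨hwC', -⟩, -⟩ | ⟨⟨-, hwD'⟩, -⟩)
    · exact hwC hwC'
    · exact hwD' hwD
  have hcl : ∀ u ∈ W, ∀ w, G.Adj u w → w ∉ Sm → w ∈ W := by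
    rintro u ⟨⟨huD, huC⟩, huK⟩ w hadj hwS
    rcases cover_cases huniv w with hwP | hwX | hwQ
    · exact absurd (Or.inr ⟨hwP, u, ⟨⟨huD, huC⟩, huK⟩, hadj⟩) hwS
    · exfalso
      by_cases hwX' : w ∈ X
      · exact hwS (Or.inl ⟨hwX, Or.inl hwX'⟩)
      · exact hwS (Or.inl ⟨hwX, Or.inr (cmp_closed hqX huK hadj hwX')⟩)
    · have hwX' : w ∉ X := fun h => hwQ.2 (hXC h)
      exact ⟨hwQ, cmp_closed hqX huK hadj hwX'⟩
  have habs := closed_absorb hg.conn hSm2 hWne hWS hcl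
  have hz : ∃ z ∈ X, z ∉ Sm := by
    by_contra hall
    push_neg at hall
    have : X.ncard ≤ Sm.ncard := Set.ncard_le_ncard hall (Set.toFinite _)
    rw [hg.hX3] at this
    omega
  obtain ⟨z, hzX, hzS⟩ := hz
  have : z ∈ W := habs z hzS
  exact this.1.2 (hXC hzX)
lemma two_le_ncard {α : Type*} [Fintype α] {s : Set α} {a b : α} (ha : a ∈ s) (hb : b ∈ s)
    (hne : a ≠ b) : 2 ≤ s.ncard := by
  have := (Set.one_lt_ncard (Set.toFinite s)).2 ⟨a, ha, b, hb, hne⟩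
  omega

/-- Core nestedness: assuming `X ⊆ Cs`, the candidate separation
`(K ∪ S, Kᶜ)` is nested with `(Cs, Ds)`. -/
lemma core_nested {G : SimpleGraph V} {X : Set V} (hg : Good G X)
    {v : V} (hv : v ∉ X) {S : Set V} (hS : S ⊆ X)
    (hSval : ∀ z ∈ S, 2 ≤ (G.neighborSet z ∩ (cmp G X v ∪ S)).ncard)
    (hd1 : ∀ x ∈ X \ S, (G.neighborSet x ∩ cmp G X v).ncard ≤ 1)
    (hmax : ∀ T, T ⊆ X → (∀ z ∈ T, 2 ≤ (G.neighborSet z ∩ (cmp G X v ∪ T)).ncard) →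
      T.ncard ≤ S.ncard)
    {Cs Ds : Set V} (hT : TriSep G Cs Ds) (hXC : X ⊆ Cs) :
    Nested (cmp G X v ∪ S) (cmp G X v)ᶜ Cs Ds := by
  classical
  have hX3 := hg.hX3
  set K := cmp G X v with hK
  have huniv := hT.1.1.1
  have horder : (Cs ∩ Ds).ncard + (sepEdges G Cs Ds).ncard = 3 := by
    have := hT.1.2
    rwa [sepOrder_eq] at this
  by_cases hXX : X ⊆ Cs ∩ Ds
  · -- the separator of (Cs,Ds) is exactly X
    have h3le : 3 ≤ (Cs ∩ Ds).ncard := by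
      rw [← hg.hX3]
      exact Set.ncard_le_ncard hXX (Set.toFinite _)
    have hXeq : X = Cs ∩ Ds := Set.eq_of_subset_of_ncard_le hXX (by omega) (Set.toFinite _)
    have hE0 : sepEdges G Cs Ds = ∅ := by
      rw [← Set.ncard_eq_zero (Set.toFinite _)]
      omega
    -- each component lies wholly on one side
    have hvside : v ∈ Cs \ Ds ∨ v ∈ Ds \ Cs := by
      rcases cover_cases huniv v with h | h | h
      · exact Or.inl h
      · exact absurd (hXeq ▸ h) hv
      · exact Or.inr h
    have hnounit : ∀ μ ∈ sepSet G Cs Ds, ¬ Mk G μ K := by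
      rintro μ (⟨t, ht, rfl⟩ | ⟨e, he, rfl⟩) hm
      · exact (cmp_subset_compl hv hm) (hXeq ▸ ht)
      · rw [hE0] at he
        exact absurd he (Set.notMem_empty e)
    have hnounit' : ∀ μ ∈ sepSet G Ds Cs, ¬ Mk G μ K := by
      rintro μ (⟨t, ht, rfl⟩ | ⟨e, he, rfl⟩) hm
      · exact (cmp_subset_compl hv hm) (hXeq ▸ ⟨ht.2, ht.1⟩)
      · rw [sepEdges_comm, hE0] at he
        exact absurd he (Set.notMem_empty e)
    rcases hvside with hvC | hvD
    · have hside : ∀ k ∈ K, k ∈ Cs \ Ds := by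
        intro k hk
        rcases cover_cases huniv k with h | h | h
        · exact h
        · exact absurd (hXeq ▸ h) (cmp_subset_compl hv hk)
        · exfalso
          obtain ⟨μ, hμ, hmk⟩ := cross_chain huniv hv
            (reach_of_same_cmp (mem_cmp_self G X v) hk) (mem_cmp_self G X v) hvC.1 h.2
          exact hnounit μ hμ hmk
      refine Or.inl ⟨?_, ?_⟩
      · rintro w (hw | hw)
        · exact (hside w hw).1
        · exact hXC (hS hw)
      · intro d hd hdK
        exact (hside d hdK).2 hd
    · have huniv2 : Ds ∪ Cs = Set.univ := by rwa [Set.union_comm]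
      have hside : ∀ k ∈ K, k ∈ Ds \ Cs := by
        intro k hk
        rcases cover_cases huniv k with h | h | h
        · exfalso
          obtain ⟨μ, hμ, hmk⟩ := cross_chain huniv2 hv
            (reach_of_same_cmp (mem_cmp_self G X v) hk) (mem_cmp_self G X v) hvD.1 h.2
          exact hnounit' μ hμ hmk
        · exact absurd (hXeq ▸ h) (cmp_subset_compl hv hk)
        · exact h
      refine Or.inr (Or.inl ⟨?_, ?_⟩)
      · rintro w (hw | hw)
        · exact (hside w hw).1
        · exact (hXeq ▸ (hS hw) : w ∈ Cs ∩ Ds).2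
      · intro c hc hcK
        exact (hside c hcK).2 hc
  · -- the separator is not all of X
    obtain ⟨xb, hxbX, hxbXX⟩ := Set.not_subset.1 hXX
    have hxbC : xb ∈ Cs := hXC hxbX
    have hxbD : xb ∉ Ds := fun h => hxbXX ⟨hxbC, h⟩
    obtain ⟨q, hqD, hqC⟩ := hT.1.1.2.2
    have hqX : q ∉ X := fun h => hqC (hXC h)
    set Km := cmp G X q with hKm
    have hallq := all_in hg hT hXC hqD hqC
    -- all of Ds \ Cs lies in Km
    have hQKm : ∀ u ∈ Ds, u ∉ Cs → u ∈ Km := by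
      intro u huD huC
      have huX : u ∉ X := fun h => huC (hXC h)
      have hallu := all_in hg hT hXC huD huC
      by_cases hcc : ∃ z, z ∈ Km ∧ z ∈ cmp G X u
      · obtain ⟨z, hz1, hz2⟩ := hcc
        have : Km = cmp G X u := cmp_eq_of_common hz1 hz2
        rw [this]
        exact mem_cmp_self G X u
      · exfalso
        push_neg at hcc
        by_cases hXne : ((Cs ∩ Ds) \ X).Nonempty
        · obtain ⟨x₀, hx₀⟩ := hXne
          exact hcc x₀ (hallq.1 hx₀) (hallu.1 hx₀)
        · by_cases hEne : (sepEdges G Cs Ds).Nonempty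
          · obtain ⟨e, he⟩ := hEne
            obtain ⟨s1, hs1e, hs1⟩ := hallq.2 e he
            obtain ⟨s2, hs2e, hs2⟩ := hallu.2 e he
            by_cases hss : s1 = s2
            · exact hcc s1 hs1 (hss ▸ hs2)
            · have hadj : G.Adj s1 s2 := by
                induction e with
                | _ x y =>
                  have hedge : G.Adj x y := G.mem_edgeSet.1 he.1
                  rcases Sym2.mem_iff.1 hs1e with rfl | rfl <;>
                    rcases Sym2.mem_iff.1 hs2e with rfl | rfl
                  · exact absurd rfl hss
                  · exact hedge
                  · exact hedge.symm
                  · exact absurd rfl hss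
              have hs2X : s2 ∉ X := cmp_subset_compl huX hs2
              exact hcc s2 (cmp_closed hqX hs1 hadj hs2X) hs2
          · -- no separator vertices outside X and no separator edges: order < 3
            rw [Set.not_nonempty_iff_eq_empty] at hXne hEne
            have hsubX : Cs ∩ Ds ⊆ X \ {xb} := by
              intro w hw
              have hwX : w ∈ X := by
                by_contra hwX
                exact absurd (hXne ▸ ⟨hw, hwX⟩) (Set.notMem_empty w)
              refine ⟨hwX, ?_⟩
              rintro rfl
              exact hxbD hw.2
            have h1' : (Cs ∩ Ds).ncard ≤ (X \ {xb}).ncard :=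
              Set.ncard_le_ncard hsubX (Set.toFinite _)
            have h2' : (X \ {xb}).ncard = X.ncard - 1 :=
              Set.ncard_diff_singleton_of_mem hxbX
            have h3' : (sepEdges G Cs Ds).ncard = 0 := by
              rw [hEne]; exact Set.ncard_empty _
            have := hg.hX3
            omega
    have hX'Km : (Cs ∩ Ds) \ X ⊆ Km := hallq.1
    by_cases hKKm : K = Km
    · -- the tri-separation (Cs,Ds) points into our component
      refine Or.inr (Or.inr (Or.inl ⟨?_, ?_⟩))
      · -- Kᶜ ⊆ Cs
        intro w hw
        by_cases hwC : w ∈ Cs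
        · exact hwC
        · exfalso
          have hwD : w ∈ Ds := by
            rcases huniv ▸ Set.mem_univ w with h | h
            · exact absurd h hwC
            · exact h
          exact hw (hKKm ▸ hQKm w hwD hwC)
      · -- Ds ⊆ K ∪ S
        intro d hdD
        by_cases hdC : d ∈ Cs
        · by_cases hdX : d ∈ X
          · -- d is a separator vertex in X: show d ∈ S
            right
            by_contra hdS
            have h2 : 2 ≤ (G.neighborSet d ∩ Ds).ncard := (hT.2 d ⟨hdC, hdD⟩).2
            have hsub : G.neighborSet d ∩ Ds ⊆
                (G.neighborSet d ∩ K) ∪ (G.neighborSet d ∩ (X ∩ (Cs ∩ Ds))) := by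
              rintro z ⟨hz1, hz2⟩
              by_cases hzC : z ∈ Cs
              · by_cases hzX : z ∈ X
                · exact Or.inr ⟨hz1, hzX, hzC, hz2⟩
                · exact Or.inl ⟨hz1, hKKm ▸ hX'Km ⟨⟨hzC, hz2⟩, hzX⟩⟩
              · exact Or.inl ⟨hz1, hKKm ▸ hQKm z hz2 hzC⟩
            have hle : (G.neighborSet d ∩ Ds).ncard ≤
                (G.neighborSet d ∩ K).ncard + (G.neighborSet d ∩ (X ∩ (Cs ∩ Ds))).ncard :=
              le_trans (Set.ncard_le_ncard hsub (Set.toFinite _)) (Set.ncard_union_le _ _)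
            have hdK1 : (G.neighborSet d ∩ K).ncard ≤ 1 := hd1 d ⟨hdX, hdS⟩
            have hyne : (G.neighborSet d ∩ (X ∩ (Cs ∩ Ds))).Nonempty := by
              apply Set.nonempty_of_ncard_ne_zero
              omega
            obtain ⟨y, hyN, hyX, -⟩ := hyne
            have hdy : d ≠ y := G.ne_of_adj hyN
            obtain ⟨ud, hudK, hudadj⟩ := good_nbr hg d hdX v hv
            by_cases hyS : y ∈ S
            · -- S ∪ {d} would be a larger valid set
              have hTval : ∀ z ∈ insert d S,
                  2 ≤ (G.neighborSet z ∩ (K ∪ insert d S)).ncard := by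
                intro z hz
                rcases Set.mem_insert_iff.1 hz with rfl | hzS
                · refine two_le_ncard (a := ud) (b := y) ⟨hudadj, Or.inl hudK⟩
                    ⟨hyN, Or.inr (Set.mem_insert_of_mem _ hyS)⟩ ?_
                  intro h
                  exact (cmp_subset_compl hv hudK) (h ▸ hyX) 
                · refine le_trans (hSval z hzS) (Set.ncard_le_ncard ?_ (Set.toFinite _))
                  intro t ⟨ht1, ht2⟩
                  rcases ht2 with h | h
                  · exact ⟨ht1, Or.inl h⟩
                  · exact ⟨ht1, Or.inr (Set.mem_insert_of_mem _ h)⟩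
              have := hmax (insert d S) (Set.insert_subset hdX hS) hTval
              rw [Set.ncard_insert_of_notMem hdS (Set.toFinite _)] at this
              omega
            · -- S ∪ {d, y} would be a larger valid set
              obtain ⟨uy, huyK, huyadj⟩ := good_nbr hg y hyX v hv
              set T := insert d (insert y S) with hTdef
              have hTval : ∀ z ∈ T, 2 ≤ (G.neighborSet z ∩ (K ∪ T)).ncard := by
                intro z hz
                rcases Set.mem_insert_iff.1 hz with rfl | hz'
                · refine two_le_ncard (a := ud) (b := y) ⟨hudadj, Or.inl hudK⟩
                    ⟨hyN, Or.inr (Set.mem_insert_of_mem _ (Set.mem_insert _ _))⟩ ?_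
                  intro h
                  exact (cmp_subset_compl hv hudK) (h ▸ hyX)
                · rcases Set.mem_insert_iff.1 hz' with rfl | hzS
                  · have hdy' : d ∈ G.neighborSet z :=
                      (G.mem_neighborSet z d).2 (((G.mem_neighborSet d z).1 hyN).symm)
                    refine two_le_ncard (a := uy) (b := d) ⟨huyadj, Or.inl huyK⟩
                      ⟨hdy', Or.inr (Set.mem_insert _ _)⟩ ?_
                    intro h
                    exact (cmp_subset_compl hv huyK) (h ▸ hdX)
                  · refine le_trans (hSval z hzS) (Set.ncard_le_ncard ?_ (Set.toFinite _))
                    intro t ⟨ht1, ht2⟩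
                    rcases ht2 with h | h
                    · exact ⟨ht1, Or.inl h⟩
                    · exact ⟨ht1, Or.inr (Set.mem_insert_of_mem _ (Set.mem_insert_of_mem _ h))⟩
              have hcard := hmax T (by
                rw [hTdef]
                exact Set.insert_subset hdX (Set.insert_subset hyX hS)) hTval
              have hyT : y ∉ S := hyS
              have h1' : (insert y S).ncard = S.ncard + 1 :=
                Set.ncard_insert_of_notMem hyT (Set.toFinite _)
              have hdT : d ∉ insert y S := by
                intro h
                rcases Set.mem_insert_iff.1 h with h' | h'
                · exact hdy h'
                · exact hdS h'
              have h2' : T.ncard = (insert y S).ncard + 1 :=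
                Set.ncard_insert_of_notMem hdT (Set.toFinite _)
              omega
          · -- separator vertex outside X: in Km = K
            exact Or.inl (hKKm ▸ hX'Km ⟨⟨hdC, hdD⟩, hdX⟩)
        · exact Or.inl (hKKm ▸ hQKm d hdD hdC)
    · -- K is a different component: it lies wholly inside Cs \ Ds
      have hside : ∀ k ∈ K, k ∈ Cs ∧ k ∉ Ds := by
        intro k hk
        have hkX : k ∉ X := cmp_subset_compl hv hk
        have hkC : k ∈ Cs := by
          by_contra hkC
          have hkD : k ∈ Ds := by
            rcases huniv ▸ Set.mem_univ k with h | h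
            · exact absurd h hkC
            · exact h
          exact hKKm (cmp_eq_of_common hk (hQKm k hkD hkC))
        refine ⟨hkC, ?_⟩
        intro hkD
        exact hKKm (cmp_eq_of_common hk (hX'Km ⟨⟨hkC, hkD⟩, hkX⟩))
      refine Or.inl ⟨?_, ?_⟩
      · rintro w (hw | hw)
        · exact (hside w hw).1
        · exact hXC (hS hw)
      · intro d hd hdK
        exact (hside d hdK).2 hd

/-- the candidate separation is totally nested -/
lemma cand_totally_nested {G : SimpleGraph V} {X : Set V} (hg : Good G X)
    {v : V} (hv : v ∉ X) {S : Set V} (hS : S ⊆ X)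
    (hSval : ∀ z ∈ S, 2 ≤ (G.neighborSet z ∩ (cmp G X v ∪ S)).ncard)
    (hd1 : ∀ x ∈ X \ S, (G.neighborSet x ∩ cmp G X v).ncard ≤ 1)
    (hmax : ∀ T, T ⊆ X → (∀ z ∈ T, 2 ≤ (G.neighborSet z ∩ (cmp G X v ∪ T)).ncard) →
      T.ncard ≤ S.ncard) :
    TotallyNested G (cmp G X v ∪ S) (cmp G X v)ᶜ := by
  intro Cs Ds hT
  rcases X_one_side hg hT with hXC | hXD
  · exact core_nested hg hv hS hSval hd1 hmax hT hXC
  · exact nested_flip (core_nested hg hv hS hSval hd1 hmax hT.symm' hXD)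
/-- two components different from a given one -/
lemma two_other_comps {G : SimpleGraph V} {X : Set V} (hg : Good G X) (v : V) :
    ∃ b1 b2 : V, b1 ∉ X ∧ b2 ∉ X ∧ cmp G X b1 ≠ cmp G X b2 ∧
      cmp G X b1 ≠ cmp G X v ∧ cmp G X b2 ≠ cmp G X v := by
  obtain ⟨a1, a2, a3, a4, h1, h2, h3, h4, h12, h13, h14, h23, h24, h34⟩ := hg.four
  by_cases e1 : cmp G X a1 = cmp G X v
  · exact ⟨a2, a3, h2, h3, h23, fun h => h12 (h.trans e1.symm).symm,
      fun h => h13 (h.trans e1.symm).symm⟩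
  · by_cases e2 : cmp G X a2 = cmp G X v
    · exact ⟨a1, a3, h1, h3, h13, e1, fun h => h23 (e2.trans h.symm)⟩
    · exact ⟨a1, a2, h1, h2, h12, e1, e2⟩

/-- every vertex of `X` has two neighbours outside any fixed component -/
lemma two_nbrs_outside {G : SimpleGraph V} {X : Set V} (hg : Good G X) (v : V)
    {x : V} (hx : x ∈ X) : 2 ≤ (G.neighborSet x ∩ (cmp G X v)ᶜ).ncard := by
  obtain ⟨b1, b2, hb1, hb2, hbb, hbv1, hbv2⟩ := two_other_comps hg v
  obtain ⟨u1, hu1, hadj1⟩ := good_nbr hg x hx b1 hb1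
  obtain ⟨u2, hu2, hadj2⟩ := good_nbr hg x hx b2 hb2
  refine two_le_ncard (a := u1) (b := u2) ⟨hadj1, ?_⟩ ⟨hadj2, ?_⟩ ?_
  · exact fun h => hbv1 (cmp_eq_of_common hu1 h)
  · exact fun h => hbv2 (cmp_eq_of_common hu2 h)
  · intro h
    exact hbb (cmp_eq_of_common hu1 (h ▸ hu2))

lemma AB_diff {G : SimpleGraph V} {X : Set V} {v : V} (hv : v ∉ X) {S : Set V} (hS : S ⊆ X) :
    (cmp G X v ∪ S) \ (cmp G X v)ᶜ = cmp G X v ∧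
    (cmp G X v)ᶜ \ (cmp G X v ∪ S) = (cmp G X v ∪ S)ᶜ ∧
    (cmp G X v ∪ S) ∩ (cmp G X v)ᶜ = S := by
  refine ⟨?_, ?_, ?_⟩
  · ext w
    constructor
    · rintro ⟨h1 | h1, h2⟩
      · exact h1
      · exact absurd (fun hc : w ∈ cmp G X v => (cmp_subset_compl hv hc) (hS h1)) h2
    · intro h
      exact ⟨Or.inl h, fun hc => hc h⟩
  · ext w
    constructor
    · rintro ⟨h1, h2⟩
      exact h2
    · intro h
      exact ⟨fun hc => h (Or.inl hc), h⟩
  · ext w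
    constructor
    · rintro ⟨h1 | h1, h2⟩
      · exact absurd h1 h2
      · exact h1
    · intro h
      exact ⟨Or.inr h, fun hc => (cmp_subset_compl hv hc) (hS h)⟩

/-- the candidate is a tri-separation -/
lemma cand_trisep {G : SimpleGraph V} {X : Set V} (hg : Good G X)
    {v : V} (hv : v ∉ X) {S : Set V} (hS : S ⊆ X)
    (hSval : ∀ z ∈ S, 2 ≤ (G.neighborSet z ∩ (cmp G X v ∪ S)).ncard)
    (hd1 : ∀ x ∈ X \ S, (G.neighborSet x ∩ cmp G X v).ncard = 1) :
    TriSep G (cmp G X v ∪ S) (cmp G X v)ᶜ := by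
  classical
  set K := cmp G X v with hK
  obtain ⟨hABd, hBAd, hABi⟩ := AB_diff (G := G) hv hS
  obtain ⟨b1, b2, hb1, hb2, hbb, hbv1, hbv2⟩ := two_other_comps hg v
  have hb1K : b1 ∉ K := fun h => hbv1 (cmp_eq_of_common (mem_cmp_self G X b1) h)
  refine ⟨⟨⟨?_, ?_, ?_⟩, ?_⟩, ?_⟩
  · ext w
    simp only [Set.mem_union, Set.mem_univ, iff_true]
    by_cases h : w ∈ K
    · exact Or.inl (Or.inl h)
    · exact Or.inr h
  · exact ⟨v, hABd ▸ mem_cmp_self G X v⟩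
  · refine ⟨b1, hBAd ▸ ?_⟩
    intro hc
    rcases hc with h | h
    · exact hb1K h
    · exact hb1 (hS h)
  · -- order is 3
    rw [sepOrder_eq, hABi]
    have himg : sepEdges G (K ∪ S) Kᶜ =
        (fun y => if h : ∃ u, u ∈ K ∧ G.Adj y u then s(y, h.choose) else s(y, y)) '' (X \ S) := by
      ext e
      constructor
      · rintro ⟨hedge, x, hx, y, hy, rfl⟩
        rw [hABd] at hx
        rw [hBAd] at hy
        have hadj : G.Adj x y := G.mem_edgeSet.1 hedge
        have hyX : y ∈ X := by
          by_contra hyX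
          exact hy (Or.inl (cmp_closed hv hx hadj hyX))
        have hyS : y ∉ S := fun h => hy (Or.inr h)
        refine ⟨y, ⟨hyX, hyS⟩, ?_⟩
        have hex : ∃ u, u ∈ K ∧ G.Adj y u := ⟨x, hx, hadj.symm⟩
        simp only [dif_pos hex]
        -- the chosen neighbour equals x by uniqueness
        obtain ⟨a, ha⟩ := Set.ncard_eq_one.1 (hd1 y ⟨hyX, hyS⟩)
        have hxa : x = a := by
          have : x ∈ G.neighborSet y ∩ K := ⟨hadj.symm, hx⟩
          rw [ha] at this
          exact this
        have hca : hex.choose = a := by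
          have : hex.choose ∈ G.neighborSet y ∩ K :=
            ⟨hex.choose_spec.2, hex.choose_spec.1⟩
          rw [ha] at this
          exact this
        rw [hca, ← hxa, Sym2.eq_swap]
      · rintro ⟨y, hy, rfl⟩
        have hex : ∃ u, u ∈ K ∧ G.Adj y u := by
          obtain ⟨u, hu, hadj⟩ := good_nbr hg y hy.1 v hv
          exact ⟨u, hu, hadj⟩
        simp only [dif_pos hex]
        obtain ⟨huK, hadj⟩ := hex.choose_spec
        refine ⟨G.mem_edgeSet.2 hadj, hex.choose, hABd ▸ huK, y, hBAd ▸ ?_, Sym2.eq_swap⟩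
        rintro (h | h)
        · exact (cmp_subset_compl hv h) hy.1
        · exact hy.2 h
    have hinj : Set.InjOn
        (fun y => if h : ∃ u, u ∈ K ∧ G.Adj y u then s(y, h.choose) else s(y, y)) (X \ S) := by
      intro y hy y' hy' heq
      have hex : ∃ u, u ∈ K ∧ G.Adj y u := by
        obtain ⟨u, hu, hadj⟩ := good_nbr hg y hy.1 v hv
        exact ⟨u, hu, hadj⟩
      have hex' : ∃ u, u ∈ K ∧ G.Adj y' u := by
        obtain ⟨u, hu, hadj⟩ := good_nbr hg y' hy'.1 v hv
        exact ⟨u, hu, hadj⟩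
      simp only [dif_pos hex, dif_pos hex'] at heq
      rw [Sym2.eq_iff] at heq
      rcases heq with ⟨h, -⟩ | ⟨h1', h2'⟩
      · exact h
      · exfalso
        exact (cmp_subset_compl hv (h2' ▸ hex.choose_spec.1)) hy'.1
    rw [himg, Set.ncard_image_of_injOn hinj]
    have hsum := Set.ncard_diff_add_ncard_of_subset hS (Set.toFinite X)
    have hx3 := hg.hX3
    omega
  · -- the degree conditions
    intro x hx
    rw [hABi] at hx
    constructor
    · exact hSval x hx
    · exact two_nbrs_outside hg v (hS hx)
lemma has_cycle_mono {G : SimpleGraph V} {A B : Set V} (h : HasCycleIn G A) (hAB : A ⊆ B) :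
    HasCycleIn G B := by
  obtain ⟨u, p, hp, hsupp⟩ := h
  exact ⟨u, p, hp, fun x hx => hAB (hsupp x hx)⟩

lemma cand_cycle_B {G : SimpleGraph V} {X : Set V} (hg : Good G X) {v : V} (hv : v ∉ X) :
    HasCycleIn G (cmp G X v)ᶜ := by
  set K := cmp G X v with hK
  obtain ⟨b1, b2, hb1, hb2, hbb, hbv1, hbv2⟩ := two_other_comps hg v
  have hb1K : b1 ∉ K := fun h => hbv1 (cmp_eq_of_common (mem_cmp_self G X b1) h)
  have hb1v : b1 ≠ v := by
    rintro rfl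
    exact hb1K (mem_cmp_self G X b1)
  refine cycle_of_min_degree (v₀ := v) (v₁ := b1) hb1K hb1v ?_
  intro w hw hwv
  by_cases hwX : w ∈ X
  · exact two_nbrs_outside hg v hwX
  · have hNsub : G.neighborSet w ⊆ Kᶜ := by
      intro z hz
      intro hzK
      exact hw (cmp_closed hv hzK ((G.mem_neighborSet w z).1 hz).symm hwX)
    rw [Set.inter_eq_left.2 hNsub]
    have h3 := three_le_degree hg.conn w
    omega

lemma cand_cycle_A2 {G : SimpleGraph V} {X : Set V} (hg : Good G X)
    {v : V} (hv : v ∉ X) {S : Set V} (hS : S ⊆ X)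
    (hSval : ∀ z ∈ S, 2 ≤ (G.neighborSet z ∩ (cmp G X v ∪ S)).ncard)
    (h2S : 2 ≤ S.ncard) : HasCycleIn G (cmp G X v ∪ S) := by
  set K := cmp G X v with hK
  obtain ⟨b1, b2, hb1, hb2, hbb, hbv1, hbv2⟩ := two_other_comps hg v
  have hb1K : b1 ∉ K ∪ S := by
    rintro (h | h)
    · exact hbv1 (cmp_eq_of_common (mem_cmp_self G X b1) h)
    · exact hb1 (hS h)
  have hvb1 : v ≠ b1 := by
    rintro rfl
    exact hb1K (Or.inl (mem_cmp_self G X v))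
  refine cycle_of_min_degree (v₀ := b1) (v₁ := v) (Or.inl (mem_cmp_self G X v)) hvb1 ?_
  intro w hw hwb
  rcases hw with hwK | hwS
  · have hsub : G.neighborSet w \ (X \ S) ⊆ G.neighborSet w ∩ (K ∪ S) := by
      rintro z ⟨hz1, hz2⟩
      by_cases hzX : z ∈ X
      · refine ⟨hz1, Or.inr ?_⟩
        by_contra hzS
        exact hz2 ⟨hzX, hzS⟩
      · exact ⟨hz1, Or.inl (cmp_closed hv hwK ((G.mem_neighborSet w z).1 hz1) hzX)⟩
    have h1' : (G.neighborSet w).ncard ≤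
        (G.neighborSet w \ (X \ S)).ncard + (X \ S).ncard := by
      refine le_trans (Set.ncard_le_ncard (fun z hz => ?_) (Set.toFinite _))
        (Set.ncard_union_le _ _)
      by_cases h : z ∈ X \ S
      · exact Or.inr h
      · exact Or.inl ⟨hz, h⟩
    have h2' : (G.neighborSet w \ (X \ S)).ncard ≤ (G.neighborSet w ∩ (K ∪ S)).ncard :=
      Set.ncard_le_ncard hsub (Set.toFinite _)
    have h3' := three_le_degree hg.conn w
    have hsum := Set.ncard_diff_add_ncard_of_subset hS (Set.toFinite X)
    have hx3 := hg.hX3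
    omega
  · exact hSval w hwS

lemma cand_cycle_A1 {G : SimpleGraph V} {X : Set V} (hg : Good G X)
    {v : V} (hv : v ∉ X) {S : Set V} (hS : S ⊆ X)
    (hSval : ∀ z ∈ S, 2 ≤ (G.neighborSet z ∩ (cmp G X v ∪ S)).ncard)
    (h1S : S.ncard = 1) : HasCycleIn G (cmp G X v ∪ S) := by
  set K := cmp G X v with hK
  obtain ⟨c, hceq⟩ := Set.ncard_eq_one.1 h1S
  have hcS : c ∈ S := by rw [hceq]; rfl
  have hcX : c ∈ X := hS hcS
  have hcK : c ∉ K := fun h => (cmp_subset_compl hv h) hcX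
  have h2 : 2 ≤ (G.neighborSet c ∩ K).ncard := by
    refine le_trans (hSval c hcS) (Set.ncard_le_ncard ?_ (Set.toFinite _))
    rintro z ⟨hz1, hz2 | hz2⟩
    · exact ⟨hz1, hz2⟩
    · exfalso
      rw [hceq, Set.mem_singleton_iff] at hz2
      rw [hz2] at hz1
      exact G.irrefl ((G.mem_neighborSet c c).1 hz1)
  obtain ⟨u, hu, u', hu', hne⟩ := (Set.one_lt_ncard
    (Set.toFinite (G.neighborSet c ∩ K))).1
    (by omega : 1 < (G.neighborSet c ∩ K).ncard)
  have hreach : Reach G Xᶜ u u' := reach_of_same_cmp hu.2 hu'.2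
  obtain ⟨p0, hp0⟩ := walk_of_reach hreach
  have hKu : (cmp G X v : Set V) = cmp G X u := cmp_eq_of_mem hu.2
  have hsupK : ∀ s ∈ p0.support, s ∈ K := by
    intro s hs
    rw [hK, hKu]
    exact hp0 s hs
  set q : G.Walk u u' := (p0.toPath : G.Walk u u') with hq
  have hqp : q.IsPath := p0.toPath.2
  have hqsup : ∀ s ∈ q.support, s ∈ K := fun s hs => hsupK s (p0.support_toPath_subset hs)
  have hadj_cu : G.Adj c u := (G.mem_neighborSet c u).1 hu.1
  have hadj_u'c : G.Adj u' c := ((G.mem_neighborSet c u').1 hu'.1).symm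
  have hcyc : (Walk.cons hadj_u'c (Walk.cons hadj_cu q)).IsCycle := by
    rw [Walk.cons_isCycle_iff]
    constructor
    · rw [Walk.cons_isPath_iff]
      exact ⟨hqp, fun h => hcK (hqsup c h)⟩
    · intro hmem
      rw [Walk.edges_cons, List.mem_cons] at hmem
      rcases hmem with hmem | hmem
      · rw [Sym2.eq_iff] at hmem
        rcases hmem with ⟨-, hcu⟩ | ⟨hu'u, -⟩
        · exact hcK (hcu ▸ hu.2)
        · exact hne (hu'u.symm)
      · exact hcK (hqsup c (q.snd_mem_support_of_mem_edges hmem))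
  refine ⟨u', _, hcyc, ?_⟩
  intro x hx
  rw [Walk.support_cons, List.mem_cons] at hx
  rcases hx with rfl | hx
  · exact Or.inl hu'.2
  rw [Walk.support_cons, List.mem_cons] at hx
  rcases hx with rfl | hx
  · exact Or.inr hcS
  · exact Or.inl (hqsup x hx)

lemma cand_cycle_A0 {G : SimpleGraph V} {X : Set V} (hg : Good G X)
    {v : V} (hv : v ∉ X)
    (hd1 : ∀ x ∈ X, (G.neighborSet x ∩ cmp G X v).ncard = 1)
    {w : V} (hwK : w ∈ cmp G X v) (hwv : w ≠ v) : HasCycleIn G (cmp G X v) := by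
  set K := cmp G X v with hK
  -- at most one vertex of K has fewer than 2 neighbours inside K
  have huniq : ∀ w1 ∈ K, ∀ w2 ∈ K, (G.neighborSet w1 ∩ K).ncard ≤ 1 →
      (G.neighborSet w2 ∩ K).ncard ≤ 1 → w1 = w2 := by
    intro w1 hw1 w2 hw2 hb1 hb2
    by_contra hne
    have hx2 : ∀ z ∈ K, (G.neighborSet z ∩ K).ncard ≤ 1 →
        2 ≤ (G.neighborSet z ∩ X).ncard := by
      intro z hz hbz
      have hsub : G.neighborSet z ⊆ (G.neighborSet z ∩ K) ∪ (G.neighborSet z ∩ X) := by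
        intro t ht
        by_cases htX : t ∈ X
        · exact Or.inr ⟨ht, htX⟩
        · exact Or.inl ⟨ht, cmp_closed hv hz ((G.mem_neighborSet z t).1 ht) htX⟩
      have h1' : (G.neighborSet z).ncard ≤
          (G.neighborSet z ∩ K).ncard + (G.neighborSet z ∩ X).ncard :=
        le_trans (Set.ncard_le_ncard hsub (Set.toFinite _)) (Set.ncard_union_le _ _)
      have h3' := three_le_degree hg.conn z
      omega
    have h21 := hx2 w1 hw1 hb1
    have h22 := hx2 w2 hw2 hb2
    have hinter : ((G.neighborSet w1 ∩ X) ∩ (G.neighborSet w2 ∩ X)).Nonempty := by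
      apply Set.nonempty_of_ncard_ne_zero
      have hie := Set.ncard_union_add_ncard_inter (G.neighborSet w1 ∩ X)
        (G.neighborSet w2 ∩ X) (Set.toFinite _) (Set.toFinite _)
      have hsub : (G.neighborSet w1 ∩ X) ∪ (G.neighborSet w2 ∩ X) ⊆ X := by
        rintro t (ht | ht) <;> exact ht.2
      have hle : ((G.neighborSet w1 ∩ X) ∪ (G.neighborSet w2 ∩ X)).ncard ≤ X.ncard :=
        Set.ncard_le_ncard hsub (Set.toFinite _)
      have hx3 := hg.hX3
      omega
    obtain ⟨x, hx1, hx2'⟩ := hinter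
    have hcontra : 2 ≤ (G.neighborSet x ∩ K).ncard := by
      refine two_le_ncard (a := w1) (b := w2) ⟨?_, hw1⟩ ⟨?_, hw2⟩ hne
      · exact (G.mem_neighborSet x w1).2 ((G.mem_neighborSet w1 x).1 hx1.1).symm
      · exact (G.mem_neighborSet x w2).2 ((G.mem_neighborSet w2 x).1 hx2'.1).symm
    have := hd1 x hx1.2
    omega
  by_cases hbad : ∃ w₀ ∈ K, (G.neighborSet w₀ ∩ K).ncard ≤ 1
  · obtain ⟨w₀, hw₀K, hw₀⟩ := hbad
    have hdeg : ∀ z ∈ K, z ≠ w₀ → 2 ≤ (G.neighborSet z ∩ K).ncard := by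
      intro z hz hzw
      by_contra hle
      push_neg at hle
      exact hzw (huniq z hz w₀ hw₀K (by omega) hw₀)
    by_cases hvw : v = w₀
    · exact cycle_of_min_degree (v₀ := w₀) (v₁ := w) hwK (fun h => hwv (h.trans hvw.symm)) hdeg
    · exact cycle_of_min_degree (v₀ := w₀) (v₁ := v) (mem_cmp_self G X v) hvw hdeg
  · push_neg at hbad
    refine cycle_of_min_degree (v₀ := v) (v₁ := w) hwK hwv ?_
    intro z hz hzv
    have := hbad z hz
    omega
/-- no totally-nested nontrivial tri-separation forces all components to be
singletons and `X` to be independent -/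
lemma structure_of_no_nested {G : SimpleGraph V} {X : Set V} (hg : Good G X)
    (hno : ¬ ∃ A B : Set V, TriSep G A B ∧ NontrivialSep G A B ∧ TotallyNested G A B) :
    (∀ v, v ∉ X → cmp G X v = {v}) ∧ (∀ a ∈ X, ∀ b ∈ X, ¬ G.Adj a b) := by
  classical
  have main : ∀ v, v ∉ X → cmp G X v = {v} ∧ (∀ a ∈ X, ∀ b ∈ X, ¬ G.Adj a b) := by
    intro v hv
    set K := cmp G X v with hK
    set Pn : ℕ → Prop := fun n => ∃ T : Set V, T ⊆ X ∧
      (∀ z ∈ T, 2 ≤ (G.neighborSet z ∩ (K ∪ T)).ncard) ∧ T.ncard = n with hPn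
    have hP0 : Pn 0 := ⟨∅, Set.empty_subset _, by simp, Set.ncard_empty _⟩
    have hbound : ∀ n, Pn n → n ≤ 3 := by
      rintro n ⟨T, hT, -, rfl⟩
      rw [← hg.hX3]
      exact Set.ncard_le_ncard hT (Set.toFinite _)
    obtain ⟨S, hSsub, hSval, hScard⟩ :=
      Nat.findGreatest_spec (Nat.zero_le 3) hP0
    have hmax : ∀ T, T ⊆ X → (∀ z ∈ T, 2 ≤ (G.neighborSet z ∩ (K ∪ T)).ncard) →
        T.ncard ≤ S.ncard := by
      intro T hT hval
      rw [hScard]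
      exact Nat.le_findGreatest (hbound _ ⟨T, hT, hval, rfl⟩) ⟨T, hT, hval, rfl⟩
    have hd1 : ∀ x ∈ X \ S, (G.neighborSet x ∩ K).ncard = 1 := by
      rintro x ⟨hxX, hxS⟩
      obtain ⟨u, huK, hadj⟩ := good_nbr hg x hxX v hv
      have hpos : 1 ≤ (G.neighborSet x ∩ K).ncard := by
        rw [Nat.one_le_iff_ne_zero]
        intro h0
        rw [Set.ncard_eq_zero (Set.toFinite _)] at h0
        exact absurd (h0 ▸ (⟨hadj, huK⟩ : u ∈ G.neighborSet x ∩ K)) (Set.notMem_empty u)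
      by_contra hne1
      have h2 : 2 ≤ (G.neighborSet x ∩ K).ncard := by omega
      have hval : ∀ z ∈ insert x S, 2 ≤ (G.neighborSet z ∩ (K ∪ insert x S)).ncard := by
        intro z hz
        rcases Set.mem_insert_iff.1 hz with rfl | hzS
        · refine le_trans h2 (Set.ncard_le_ncard ?_ (Set.toFinite _))
          rintro t ⟨ht1, ht2⟩
          exact ⟨ht1, Or.inl ht2⟩
        · refine le_trans (hSval z hzS) (Set.ncard_le_ncard ?_ (Set.toFinite _))
          rintro t ⟨ht1, ht2 | ht2⟩
          · exact ⟨ht1, Or.inl ht2⟩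
          · exact ⟨ht1, Or.inr (Set.mem_insert_of_mem _ ht2)⟩
      have := hmax _ (Set.insert_subset hxX hSsub) hval
      rw [Set.ncard_insert_of_notMem hxS (Set.toFinite _)] at this
      omega
    have hd1le : ∀ x ∈ X \ S, (G.neighborSet x ∩ K).ncard ≤ 1 :=
      fun x hx => le_of_eq (hd1 x hx)
    have htri := cand_trisep hg hv hSsub hSval hd1
    have htn := cand_totally_nested hg hv hSsub hSval hd1le hmax
    have hB := cand_cycle_B hg hv
    have hnoA : ¬ HasCycleIn G (K ∪ S) := by
      intro hA
      exact hno ⟨K ∪ S, Kᶜ, htri, ⟨hA, hB⟩, htn⟩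
    have hS0 : S.ncard = 0 := by
      by_contra h0
      rcases Nat.lt_or_ge S.ncard 2 with hlt | hge
      · exact hnoA (cand_cycle_A1 hg hv hSsub hSval (by omega))
      · exact hnoA (cand_cycle_A2 hg hv hSsub hSval hge)
    have hSempty : S = ∅ := by rwa [Set.ncard_eq_zero (Set.toFinite _)] at hS0
    have hd1' : ∀ x ∈ X, (G.neighborSet x ∩ K).ncard = 1 := by
      intro x hx
      exact hd1 x (by rw [hSempty]; exact ⟨hx, Set.notMem_empty x⟩)
    constructor
    · ext w
      constructor
      · intro hw
        by_contra hwv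
        rw [Set.mem_singleton_iff] at hwv
        exact hnoA (has_cycle_mono (cand_cycle_A0 hg hv hd1' hw hwv) Set.subset_union_left)
      · rintro rfl
        exact mem_cmp_self G X w
    · intro a ha b hb hadj
      have hab : a ≠ b := hadj.ne
      obtain ⟨ua, huaK, hadja⟩ := good_nbr hg a ha v hv
      obtain ⟨ub, hubK, hadjb⟩ := good_nbr hg b hb v hv
      have hval : ∀ z ∈ ({a, b} : Set V),
          2 ≤ (G.neighborSet z ∩ (K ∪ {a, b})).ncard := by
        intro z hz
        rcases hz with rfl | rfl
        · refine two_le_ncard (a := ua) (b := b) ⟨hadja, Or.inl huaK⟩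
            ⟨hadj, Or.inr (Or.inr rfl)⟩ ?_
          intro h
          exact (cmp_subset_compl hv huaK) (h ▸ hb)
        · refine two_le_ncard (a := ub) (b := a) ⟨hadjb, Or.inl hubK⟩
            ⟨hadj.symm, Or.inr (Or.inl rfl)⟩ ?_
          intro h
          exact (cmp_subset_compl hv hubK) (h ▸ ha)
      have hle := hmax {a, b} (by
        intro z hz
        rcases hz with rfl | rfl
        · exact ha
        · exact hb) hval
      rw [Set.ncard_pair hab] at hle
      omega
  obtain ⟨a1, -, -, -, h1, -⟩ := hg.four
  exact ⟨fun v hv => (main v hv).1, (main a1 h1).2⟩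

/-- If a 3-connected graph has a non-half-connected tri-separation
and no totally-nested nontrivial tri-separation, then it is a `K_{3,m}` with `m ≥ 4`. -/
theorem stmt13 (G : SimpleGraph V) (h3 : KConnected 3 G) (C D : Set V)
    (hCD : TriSep G C D)
    (h1 : ¬ (G.induce (C \ D)).Connected) (h2 : ¬ (G.induce (D \ C)).Connected)
    (hno : ¬ ∃ A B : Set V, TriSep G A B ∧ NontrivialSep G A B ∧ TotallyNested G A B) :
    ∃ m : ℕ, 4 ≤ m ∧ Nonempty (G ≃g completeBipartiteGraph (Fin 3) (Fin m)) := by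
  classical
  set X := C ∩ D with hXdef
  have hE : sepEdges G C D = ∅ := sepEdges_empty_of_disconnected h3 hCD h1
  have hX3 : X.ncard = 3 := by
    have := hCD.1.2
    rw [sepOrder_eq, hE, Set.ncard_empty] at this
    rw [← hXdef] at this
    omega
  obtain ⟨⟨⟨huniv, hPne, hQne⟩, -⟩, -⟩ := hCD
  have hPadj : ∀ u ∈ C \ D, ∀ w ∈ D \ C, ¬ G.Adj u w := by
    intro u hu w hw hadj
    have hmem : s(u, w) ∈ sepEdges G C D := ⟨G.mem_edgeSet.2 hadj, u, hu, w, hw, rfl⟩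
    rw [hE] at hmem
    exact absurd hmem (Set.notMem_empty _)
  have hPX : ∀ u ∈ C \ D, u ∉ X := fun u hu h => hu.2 h.2
  have hQX : ∀ u ∈ D \ C, u ∉ X := fun u hu h => hu.2 h.1
  have hPcl : ∀ u ∈ C \ D, ∀ z, G.Adj u z → z ∉ X → z ∈ C \ D := by
    intro u hu z hadj hz
    rcases cover_cases huniv z with h | h | h
    · exact h
    · exact absurd h hz
    · exact absurd hadj (fun had => hPadj u hu z h had)
  have hQcl : ∀ u ∈ D \ C, ∀ z, G.Adj u z → z ∉ X → z ∈ D \ C := by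
    intro u hu z hadj hz
    rcases cover_cases huniv z with h | h | h
    · exact absurd hadj.symm (fun had => hPadj z h u hu had)
    · exact absurd h hz
    · exact h
  have hside : ∀ (W : Set V), (∀ u ∈ W, ∀ z, G.Adj u z → z ∉ X → z ∈ W) →
      ∀ u w, u ∈ W → Reach G Xᶜ u w → w ∈ W ∧ Reach G W u w := by
    intro W hWcl u w hu h
    induction h with
    | refl => exact ⟨hu, Relation.ReflTransGen.refl⟩
    | tail hum hmw ih =>
        have hw' := hWcl _ ih.1 _ hmw.1 hmw.2.2
        exact ⟨hw', Reach.tail' ih.2 hmw.1 ih.1 hw'⟩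
  obtain ⟨p1, hp1, p2, hp2, hnrp⟩ : ∃ p1 ∈ C \ D, ∃ p2 ∈ C \ D, ¬ Reach G (C \ D) p1 p2 := by
    by_contra hall
    push_neg at hall
    exact h1 (induce_connected_of_reach hPne hall)
  obtain ⟨q1, hq1, q2, hq2, hnrq⟩ : ∃ q1 ∈ D \ C, ∃ q2 ∈ D \ C, ¬ Reach G (D \ C) q1 q2 := by
    by_contra hall
    push_neg at hall
    exact h2 (induce_connected_of_reach hQne hall)
  have hcmp_ne_p : cmp G X p1 ≠ cmp G X p2 := by
    intro he
    have hmem : p2 ∈ cmp G X p1 := he ▸ mem_cmp_self G X p2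
    exact hnrp (hside _ hPcl p1 p2 hp1 hmem).2
  have hcmp_ne_q : cmp G X q1 ≠ cmp G X q2 := by
    intro he
    have hmem : q2 ∈ cmp G X q1 := he ▸ mem_cmp_self G X q2
    exact hnrq (hside _ hQcl q1 q2 hq1 hmem).2
  have hPQdisj : ∀ u ∈ C \ D, ∀ w ∈ D \ C, cmp G X u ≠ cmp G X w := by
    intro u hu w hw he
    have hmem : w ∈ cmp G X u := he ▸ mem_cmp_self G X w
    exact (hside _ hPcl u w hu hmem).1.2 hw.1
  have hg : Good G X := ⟨h3, hX3, p1, p2, q1, q2, hPX _ hp1, hPX _ hp2, hQX _ hq1, hQX _ hq2,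
    hcmp_ne_p, hPQdisj p1 hp1 q1 hq1, hPQdisj p1 hp1 q2 hq2,
    hPQdisj p2 hp2 q1 hq1, hPQdisj p2 hp2 q2 hq2, hcmp_ne_q⟩
  obtain ⟨hsing, hindep⟩ := structure_of_no_nested hg hno
  have hNv : ∀ v, v ∉ X → G.neighborSet v = X := by
    intro v hv
    have hsub : G.neighborSet v ⊆ X := by
      intro z hz
      by_contra hzX
      have hzc : z ∈ cmp G X v :=
        cmp_closed hv (mem_cmp_self G X v) ((G.mem_neighborSet v z).1 hz) hzX
      rw [hsing v hv, Set.mem_singleton_iff] at hzc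
      rw [hzc] at hz
      exact G.irrefl ((G.mem_neighborSet v v).1 hz)
    refine Set.eq_of_subset_of_ncard_le hsub ?_ (Set.toFinite _)
    rw [hX3]
    exact three_le_degree h3 v
  have hadj_iff : ∀ u w : V, G.Adj u w ↔ ((u ∈ X ∧ w ∉ X) ∨ (u ∉ X ∧ w ∈ X)) := by
    intro u w
    constructor
    · intro hadj
      by_cases huX : u ∈ X <;> by_cases hwX : w ∈ X
      · exact absurd hadj (hindep u huX w hwX)
      · exact Or.inl ⟨huX, hwX⟩
      · exact Or.inr ⟨huX, hwX⟩
      · exfalso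
        have hmem : w ∈ G.neighborSet u := hadj
        rw [hNv u huX] at hmem
        exact hwX hmem
    · rintro (⟨huX, hwX⟩ | ⟨huX, hwX⟩)
      · have hmem : u ∈ G.neighborSet w := by rw [hNv w hwX]; exact huX
        exact ((G.mem_neighborSet w u).1 hmem).symm
      · have hmem : w ∈ G.neighborSet u := by rw [hNv u huX]; exact hwX
        exact (G.mem_neighborSet u w).1 hmem
  letI : DecidablePred (· ∈ X) := Classical.decPred _
  set m := (Xᶜ).ncard with hmdef
  have hcardX : Fintype.card {x // x ∈ X} = 3 := by
    rw [← hX3, Set.ncard_eq_toFinset_card', Set.toFinset_card]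
  have hcardM : Fintype.card {x // ¬ x ∈ X} = m := by
    rw [Fintype.card_congr (Equiv.subtypeEquivRight
      (fun x => (Set.mem_compl_iff X x).symm))]
    rw [hmdef, Set.ncard_eq_toFinset_card', Set.toFinset_card]
  have hm4 : 4 ≤ m := by
    refine four_le_ncard (Set.toFinite _) (hPX _ hp1) (hPX _ hp2) (hQX _ hq1) (hQX _ hq2)
      ?_ ?_ ?_ ?_ ?_ ?_
    · exact fun h => hcmp_ne_p (by rw [h])
    · exact fun h => hq1.2 (h ▸ hp1.1)
    · exact fun h => hq2.2 (h ▸ hp1.1)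
    · exact fun h => hq1.2 (h ▸ hp2.1)
    · exact fun h => hq2.2 (h ▸ hp2.1)
    · exact fun h => hcmp_ne_q (by rw [h])
  refine ⟨m, hm4, ?_⟩
  let eX : {x // x ∈ X} ≃ Fin 3 := Fintype.equivFinOfCardEq hcardX
  let eM : {x // ¬ x ∈ X} ≃ Fin m := Fintype.equivFinOfCardEq hcardM
  let e : V ≃ (Fin 3 ⊕ Fin m) := (Equiv.sumCompl (· ∈ X)).symm.trans (Equiv.sumCongr eX eM)
  have heL : ∀ a : V, ∀ ha : a ∈ X, e a = Sum.inl (eX ⟨a, ha⟩) := by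
    intro a ha
    simp only [e, Equiv.trans_apply, Equiv.sumCompl_symm_apply_of_pos ha,
      Equiv.sumCongr_apply, Sum.map_inl]
  have heR : ∀ a : V, ∀ ha : ¬ a ∈ X, e a = Sum.inr (eM ⟨a, ha⟩) := by
    intro a ha
    simp only [e, Equiv.trans_apply, Equiv.sumCompl_symm_apply_of_neg ha,
      Equiv.sumCongr_apply, Sum.map_inr]
  refine ⟨⟨e, ?_⟩⟩
  intro a b
  by_cases haX : a ∈ X <;> by_cases hbX : b ∈ X
  · rw [heL a haX, heL b hbX]
    simp [hadj_iff a b, haX, hbX]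
  · rw [heL a haX, heR b hbX]
    simp [hadj_iff a b, haX, hbX]
  · rw [heR a haX, heL b hbX]
    simp [hadj_iff a b, haX, hbX]
  · rw [heR a haX, heR b hbX]
    simp [hadj_iff a b, haX, hbX]

end Paper
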